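/- Let Γ be a finite connected simple graph with vertex set {1,…,n} and let t, t' be disjoint tubes of Γ that are not linked (i.e., t and t' are far apart). Then sgn^Γ(σ_t) · sgn^{Γ_t^*}(σ_{t'}) = sgn^Γ(σ_{t'}) · sgn^{Γ_{t'}^*}(σ_t), where in the factors sgn^{Γ_t^*}(σ_{t'}) and sgn^{Γ_{t'}^*}(σ_t) the vertex sets of the reconnected complements are relabeled order-preservingly by initial segments {1,…,n−|t|} and {1,…,n−|t'|} respectively, and t' (resp. t) is viewed as a tube of the relabeled graph. -/

import Mathlib

open scoped Classical
open TensorProduct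

noncomputable section

/-- A finite simple graph whose vertices are a finite set of (totally ordered) naturals. -/
structure FinGraph : Type where
  verts : Finset ℕ
  Adj : ℕ → ℕ → Prop
  symm : ∀ v w, Adj v w → Adj w v
  loopless : ∀ v, ¬ Adj v v
  support : ∀ v w, Adj v w → v ∈ verts ∧ w ∈ verts

namespace CDTub

/-- Connectivity of a vertex set within a graph: any two of its vertices are joined by a
walk staying inside the set. -/
def VConn (G : FinGraph) (s : Finset ℕ) : Prop :=
  ∀ v ∈ s, ∀ w ∈ s, Relation.ReflTransGen (fun a b => a ∈ s ∧ b ∈ s ∧ G.Adj a b) v w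

/-- A tube: a nonempty set of vertices inducing a connected subgraph. -/
def IsTube (G : FinGraph) (t : Finset ℕ) : Prop :=
  t.Nonempty ∧ t ⊆ G.verts ∧ VConn G t

/-- A connected (nonempty) graph: the universal tube is a tube. -/
def IsConnGraph (G : FinGraph) : Prop := IsTube G G.verts

/-- Two vertex sets are far apart: disjoint and with no edge between them. -/
def FarApart (G : FinGraph) (a b : Finset ℕ) : Prop :=
  Disjoint a b ∧ ¬ ∃ v ∈ a, ∃ w ∈ b, G.Adj v w

/-- Compatible tubes: nested or far apart. -/
def Compatible (G : FinGraph) (a b : Finset ℕ) : Prop :=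
  a ⊆ b ∨ b ⊆ a ∨ FarApart G a b

/-- Linked tubes: disjoint and joined by an edge. -/
def Linked (G : FinGraph) (a b : Finset ℕ) : Prop :=
  Disjoint a b ∧ ∃ v ∈ a, ∃ w ∈ b, G.Adj v w

/-- A tubing of a connected graph: pairwise compatible tubes containing the universal tube. -/
def IsTubing (G : FinGraph) (T : Finset (Finset ℕ)) : Prop :=
  G.verts ∈ T ∧ (∀ t ∈ T, IsTube G t) ∧
    ∀ t ∈ T, ∀ t' ∈ T, t ≠ t' → Compatible G t t'

/-- Induced subgraph on a set of vertices. -/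
def induce (G : FinGraph) (t : Finset ℕ) : FinGraph where
  verts := t
  Adj v w := v ∈ t ∧ w ∈ t ∧ G.Adj v w
  symm := fun v w h => ⟨h.2.1, h.1, G.symm v w h.2.2⟩
  loopless := fun v h => G.loopless v h.2.2
  support := fun _ _ h => ⟨h.1, h.2.1⟩

/-- Simultaneous reconnected complement with respect to a family `F` of tubes
(for a single tube, or a family of pairwise far apart tubes, this is the (iterated)
reconnected complement). -/
def reconnAll (G : FinGraph) (F : Finset (Finset ℕ)) : FinGraph where
  verts := G.verts \ F.biUnion id
  Adj v w := v ≠ w ∧ v ∈ G.verts \ F.biUnion id ∧ w ∈ G.verts \ F.biUnion id ∧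
    (G.Adj v w ∨ ∃ f ∈ F, (∃ u ∈ f, G.Adj v u) ∧ ∃ u' ∈ f, G.Adj w u')
  symm := by
    rintro v w ⟨hne, hv, hw, h⟩
    refine ⟨hne.symm, hw, hv, ?_⟩
    rcases h with h | ⟨f, hf, h1, h2⟩
    · exact Or.inl (G.symm _ _ h)
    · exact Or.inr ⟨f, hf, h2, h1⟩
  loopless := fun v h => h.1 rfl
  support := fun _ _ h => ⟨h.2.1, h.2.2.1⟩

/-- Reconnected complement `Γ_t^*` of a graph with respect to a tube. -/
def reconn (G : FinGraph) (t : Finset ℕ) : FinGraph := reconnAll G {t}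

/-- The proper tubes of a tubing. -/
def properTubes (G : FinGraph) (T : Finset (Finset ℕ)) : Finset (Finset ℕ) :=
  T.filter (fun s => s ≠ G.verts)

/-- The maximal proper tubes of a tubing. -/
def MaxtP (G : FinGraph) (T : Finset (Finset ℕ)) : Finset (Finset ℕ) :=
  (properTubes G T).filter (fun s => ∀ s' ∈ properTubes G T, s ⊆ s' → s = s')

/-- The iterated reconnected complement `Γ_T^*` with respect to the maximal proper tubes. -/
def gammaStar (G : FinGraph) (T : Finset (Finset ℕ)) : FinGraph :=
  reconnAll G (MaxtP G T)

/-- Restriction `T|_t` of a tubing to a tube. -/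
def restrictT (T : Finset (Finset ℕ)) (t : Finset ℕ) : Finset (Finset ℕ) :=
  T.filter (fun s => s ⊆ t)

/-- For a tube `s` of `Γ_T^*`, the tube `s̃` of `Γ`: the union of `s` with all maximal
proper tubes of `T` linked to `s`. -/
def tildeT (G : FinGraph) (T : Finset (Finset ℕ)) (s : Finset ℕ) : Finset ℕ :=
  s ∪ ((MaxtP G T).filter (fun m => Linked G m s)).biUnion id

/-- Substitution `T •_Γ S` of a tubing `S` of `Γ_T^*` into the tubing `T`. -/
def substT (G : FinGraph) (T S : Finset (Finset ℕ)) : Finset (Finset ℕ) :=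
  T ∪ S.image (tildeT G T)

/-- The `t`-substitution `γ_t(T;S) = T ∪ (T|_t •_{Γ_t} S)`. -/
def gammaSub (G : FinGraph) (T : Finset (Finset ℕ)) (t : Finset ℕ)
    (S : Finset (Finset ℕ)) : Finset (Finset ℕ) :=
  T ∪ substT (induce G t) (restrictT T t) S

/-- The tubing `T_t^*` induced on the reconnected complement `Γ_t^*`. -/
def indStar (T : Finset (Finset ℕ)) (t : Finset ℕ) : Finset (Finset ℕ) :=
  T.filter (fun s => Disjoint s t) ∪ (T.filter (fun s => t ⊂ s)).image (fun s => s \ t)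

/-- The operation `T ◇ S` of Definition 2.4(2). -/
def diamond (G : FinGraph) (T : Finset (Finset ℕ)) (t : Finset ℕ)
    (S : Finset (Finset ℕ)) : Finset (Finset ℕ) :=
  T ∪ S.filter (fun s => ¬ Linked G s t) ∪
    (S.filter (fun s => Linked G s t)).image (fun s => s ∪ t)

/-- The tubes of `T`, viewed as subsets of the subtype of vertices. -/
def tubeSets (G : FinGraph) (T : Finset (Finset ℕ)) : Set (Set {x // x ∈ G.verts}) :=
  {U | ∃ t ∈ T, U = {x : {x // x ∈ G.verts} | (x : ℕ) ∈ t}}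

/-- The topology on the vertex set generated by the tubes of `T`. -/
def tubingTop (G : FinGraph) (T : Finset (Finset ℕ)) :
    TopologicalSpace {x // x ∈ G.verts} :=
  TopologicalSpace.generateFrom (tubeSets G T)

/-- One-line notation of the permutation `σ_t`: the vertices of `t` in increasing order
followed by the remaining vertices in increasing order. -/
def sigmaList (X t : Finset ℕ) : List ℕ :=
  t.sort (· ≤ ·) ++ (X \ t).sort (· ≤ ·)

/-- Number of `Γ`-inversions of a permutation given by its one-line notation `l`:
pairs of positions `p < q` carrying values `a > b` which form an edge of `Γ`. -/
def invCount (G : FinGraph) (l : List ℕ) : ℕ :=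
  ((Finset.range l.length ×ˢ Finset.range l.length).filter
    (fun pq => pq.1 < pq.2 ∧ l.getD pq.2 0 < l.getD pq.1 0 ∧
      G.Adj (l.getD pq.1 0) (l.getD pq.2 0))).card

/-- The signature `sgn^Γ(σ) = (-1)^{inv_Γ(σ)}`. -/
def graphSgn (G : FinGraph) (l : List ℕ) : ℤ := (-1) ^ invCount G l

/-- Rank (1-based) of `v` inside a finite set `X` of naturals: the order-preserving
relabelling of `X` by `{1,…,|X|}`. -/
def rk (X : Finset ℕ) (v : ℕ) : ℕ := (X.filter (fun u => u ≤ v)).card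

/-- Order-preserving relabelling of a graph by the initial segment `{1,…,n}`. -/
def relabelG (G : FinGraph) : FinGraph where
  verts := G.verts.image (rk G.verts)
  Adj i j := i ≠ j ∧ ∃ v w, G.Adj v w ∧ i = rk G.verts v ∧ j = rk G.verts w
  symm := by
    rintro i j ⟨hne, v, w, h, hi, hj⟩
    exact ⟨hne.symm, w, v, G.symm _ _ h, hj, hi⟩
  loopless := fun _ h => h.1 rfl
  support := by
    rintro i j ⟨hne, v, w, h, hi, hj⟩
    exact ⟨Finset.mem_image.mpr ⟨v, (G.support _ _ h).1, hi.symm⟩,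
      Finset.mem_image.mpr ⟨w, (G.support _ _ h).2, hj.symm⟩⟩

/-- Order-preserving relabelling of a subset of `X`. -/
def relabelF (X t : Finset ℕ) : Finset ℕ := t.image (rk X)

/-- Order-preserving relabelling of a family of subsets of `X`. -/
def relabelT (X : Finset ℕ) (T : Finset (Finset ℕ)) : Finset (Finset ℕ) :=
  T.image (relabelF X)

/-- Connected components (in `G`) of a set of vertices. -/
def comps (G : FinGraph) (s : Finset ℕ) : Finset (Finset ℕ) :=
  s.image (fun v => s.filter (fun w =>
    Relation.ReflTransGen (fun a b => a ∈ s ∧ b ∈ s ∧ G.Adj a b) v w))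

/-- The restriction map `res_Ω^Γ` on tubings: replace each tube by its connected
components in `Ω`. -/
def resT (Om : FinGraph) (T : Finset (Finset ℕ)) : Finset (Finset ℕ) :=
  T.biUnion (comps Om)

/-- Shift of a vertex set by `n`. -/
def shiftF (n : ℕ) (s : Finset ℕ) : Finset ℕ := s.image (fun v => v + n)

/-- Shift of a family of vertex sets by `n`. -/
def shiftT (n : ℕ) (S : Finset (Finset ℕ)) : Finset (Finset ℕ) := S.image (shiftF n)

/-- Shift of a graph by `n`. -/
def shiftG (n : ℕ) (G : FinGraph) : FinGraph where
  verts := shiftF n G.verts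
  Adj v w := ∃ a b, G.Adj a b ∧ v = a + n ∧ w = b + n
  symm := by
    rintro v w ⟨a, b, h, rfl, rfl⟩
    exact ⟨b, a, G.symm _ _ h, rfl, rfl⟩
  loopless := by
    rintro v ⟨a, b, h, ha, hb⟩
    have : a = b := by omega
    exact G.loopless b (this ▸ h)
  support := by
    rintro v w ⟨a, b, h, rfl, rfl⟩
    exact ⟨Finset.mem_image.mpr ⟨a, (G.support _ _ h).1, rfl⟩,
      Finset.mem_image.mpr ⟨b, (G.support _ _ h).2, rfl⟩⟩

/-- `X_T` : the vertices belonging to no proper tube of `T`. -/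
def freeVerts (G : FinGraph) (T : Finset (Finset ℕ)) : Finset ℕ :=
  G.verts.filter (fun v => ∀ s ∈ T, s ≠ G.verts → v ∉ s)

/-- The endpoint `max X_T` of the joining edge. -/
def joinA (G : FinGraph) (T : Finset (Finset ℕ)) : ℕ :=
  WithBot.unbotD 0 (freeVerts G T).max

/-- The endpoint `n + min X_S` of the joining edge. -/
def joinB (Om : FinGraph) (S : Finset (Finset ℕ)) (n : ℕ) : ℕ :=
  n + WithTop.untopD 0 (freeVerts Om S).min

/-- Vertex set of the joined graph `Γ ∪_{T,S} Ω`. -/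
def joinVerts (G Om : FinGraph) (n : ℕ) : Finset ℕ := G.verts ∪ shiftF n Om.verts

/-- The joined graph `Γ ∪_{T,S} Ω`: the disjoint union (with `Ω` shifted by `n`)
plus one edge from `max X_T` to `n + min X_S`. -/
def joinG (G Om : FinGraph) (T S : Finset (Finset ℕ)) (n : ℕ) : FinGraph where
  verts := joinVerts G Om n
  Adj v w := G.Adj v w ∨ (shiftG n Om).Adj v w ∨
    (v ≠ w ∧ v ∈ joinVerts G Om n ∧ w ∈ joinVerts G Om n ∧
      ((v = joinA G T ∧ w = joinB Om S n) ∨ (w = joinA G T ∧ v = joinB Om S n)))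
  symm := by
    rintro v w (h | h | ⟨hne, hv, hw, hc⟩)
    · exact Or.inl (G.symm _ _ h)
    · exact Or.inr (Or.inl ((shiftG n Om).symm _ _ h))
    · exact Or.inr (Or.inr ⟨hne.symm, hw, hv, hc.symm⟩)
  loopless := by
    rintro v (h | h | ⟨hne, _⟩)
    · exact G.loopless v h
    · exact (shiftG n Om).loopless v h
    · exact hne rfl
  support := by
    rintro v w (h | h | ⟨_, hv, hw, _⟩)
    · exact ⟨Finset.mem_union_left _ (G.support _ _ h).1,
        Finset.mem_union_left _ (G.support _ _ h).2⟩
    · exact ⟨Finset.mem_union_right _ ((shiftG n Om).support _ _ h).1,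
        Finset.mem_union_right _ ((shiftG n Om).support _ _ h).2⟩
    · exact ⟨hv, hw⟩

/-- `T ▷ S`. -/
def trR (G Om : FinGraph) (T S : Finset (Finset ℕ)) (n : ℕ) : Finset (Finset ℕ) :=
  T ∪ shiftT n (properTubes Om S) ∪ {joinVerts G Om n}

/-- `T ◁ S`. -/
def trL (G Om : FinGraph) (T S : Finset (Finset ℕ)) (n : ℕ) : Finset (Finset ℕ) :=
  properTubes G T ∪ shiftT n S ∪ {joinVerts G Om n}

/-- `T ⊥ S`. -/
def tPerp (G Om : FinGraph) (T S : Finset (Finset ℕ)) (n : ℕ) : Finset (Finset ℕ) :=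
  properTubes G T ∪ shiftT n (properTubes Om S) ∪ {joinVerts G Om n}

/-- Equality of graphs: same vertex set and same edges. -/
def GEq (A B : FinGraph) : Prop :=
  A.verts = B.verts ∧ ∀ v w, A.Adj v w ↔ B.Adj v w

/-- Index type for the basis of `Tub⁺`: `none` is the unit `1`, `some (Γ,T)` is a pair. -/
abbrev TubIdx : Type := Option (FinGraph × Finset (Finset ℕ))

/-- A pair `(Γ,T)` relabelled order-preservingly to standard vertex set, identified
with the unit `1` when the vertex set is empty. -/
def embPair (G : FinGraph) (T : Finset (Finset ℕ)) : TubIdx :=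
  if G.verts = ∅ then none else some (relabelG G, relabelT G.verts T)

/-- The value of the pre-Lie coproduct `Δ_•` on a basis element. -/
def deltaFun (K : Type) [CommRing K] (i : TubIdx) :
    (TubIdx →₀ K) ⊗[K] (TubIdx →₀ K) :=
  match i with
  | none => Finsupp.single (none : TubIdx) (1 : K) ⊗ₜ[K] Finsupp.single (none : TubIdx) (1 : K)
  | some (G, T) =>
      (∑ t ∈ T, (Finsupp.single (embPair (induce G t) (restrictT T t)) (1 : K)) ⊗ₜ[K]
        (Finsupp.single (embPair (reconn G t) (indStar T t)) (1 : K)))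
      + (Finsupp.single (none : TubIdx) (1 : K)) ⊗ₜ[K]
          (Finsupp.single (some (G, T) : TubIdx) (1 : K))

/-- The pre-Lie coproduct `Δ_•` on `Tub⁺`, the free module on `TubIdx`. -/
def delta (K : Type) [CommRing K] :
    (TubIdx →₀ K) →ₗ[K] (TubIdx →₀ K) ⊗[K] (TubIdx →₀ K) :=
  Finsupp.lift ((TubIdx →₀ K) ⊗[K] (TubIdx →₀ K)) K TubIdx (deltaFun K)

end CDTub

section AuxSgn
open CDTub

/-- Count of "graph inversion pairs" between two sets: pairs `(a,b) ∈ A × B` with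
`b < a` and `{a,b}` an edge. -/
def cpairs (G : FinGraph) (A B : Finset ℕ) : ℕ :=
  ((A ×ˢ B).filter fun p => p.2 < p.1 ∧ G.Adj p.1 p.2).card

lemma invCount_sigmaList (G : FinGraph) (X s : Finset ℕ) :
    invCount G (sigmaList X s) = cpairs G s (X \ s) := by
  classical
  set L1 := s.sort (· ≤ ·) with hL1
  set L2 := (X \ s).sort (· ≤ ·) with hL2
  have hlsig : sigmaList X s = L1 ++ L2 := rfl
  set l := L1 ++ L2 with hl
  have hdisj : L1.Disjoint L2 := by
    intro a ha hb
    exact (Finset.mem_sdiff.1 ((Finset.mem_sort _).1 hb)).2 ((Finset.mem_sort _).1 ha)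
  have hnd : l.Nodup := (Finset.sort_nodup s _).append (Finset.sort_nodup _ _) hdisj
  have hlen : l.length = L1.length + L2.length := List.length_append
  have e1 : ∀ p (hp : p < L1.length), l.getD p 0 = L1[p] := by
    intro p hp
    have hpl : p < l.length := by omega
    rw [List.getD_eq_getElem l 0 hpl, List.getElem_append_left hp]
  have e2 : ∀ q (h1 : L1.length ≤ q) (h2 : q < l.length), l.getD q 0 = L2[q - L1.length]'(by omega) := by
    intro q h1 h2
    rw [List.getD_eq_getElem l 0 h2, List.getElem_append_right h1]
  have key : ∀ p q, p < q → q < l.length → l.getD q 0 < l.getD p 0 →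
      p < L1.length ∧ L1.length ≤ q := by
    intro p q hpq hq hlt
    by_cases h1 : q < L1.length
    · exfalso
      have hp : p < L1.length := hpq.trans h1
      have hs := (Finset.sortedLT_sort s).pairwise.rel_get_of_lt
        (a := ⟨p, hp⟩) (b := ⟨q, h1⟩) (by exact hpq)
      rw [e1 p hp, e1 q h1] at hlt
      simp only [List.get_eq_getElem, ← hL1] at hs
      omega
    · push_neg at h1
      refine ⟨?_, h1⟩
      by_contra hp
      push_neg at hp
      have hq2 : q - L1.length < L2.length := by omega
      have hp2 : p - L1.length < L2.length := by omega
      have hs := (Finset.sortedLT_sort (X \ s)).pairwise.rel_get_of_lt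
        (a := ⟨p - L1.length, hp2⟩) (b := ⟨q - L1.length, hq2⟩) (by simp; omega)
      rw [e2 p hp (by omega), e2 q h1 hq] at hlt
      simp only [List.get_eq_getElem, ← hL2] at hs
      omega
  rw [hlsig]
  unfold invCount cpairs
  apply Finset.card_bij' (i := fun pq _ => (l.getD pq.1 0, l.getD pq.2 0))
    (j := fun ab _ => (l.idxOf ab.1, l.idxOf ab.2))
  · intro pq hpq
    rw [Finset.mem_filter] at hpq
    obtain ⟨hmem, h12, hlt, hadj⟩ := hpq
    rw [Finset.mem_product, Finset.mem_range, Finset.mem_range] at hmem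
    obtain ⟨hk1, hk2⟩ := key pq.1 pq.2 h12 hmem.2 hlt
    rw [Finset.mem_filter, Finset.mem_product]
    refine ⟨⟨?_, ?_⟩, hlt, hadj⟩
    · rw [e1 pq.1 hk1]
      exact (Finset.mem_sort _).1 (List.getElem_mem _)
    · rw [e2 pq.2 hk2 hmem.2]
      exact (Finset.mem_sort _).1 (List.getElem_mem _)
  · intro ab hab
    rw [Finset.mem_filter, Finset.mem_product] at hab
    obtain ⟨⟨ha, hb⟩, hlt, hadj⟩ := hab
    have ha1 : ab.1 ∈ L1 := (Finset.mem_sort _).2 ha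
    have hb2 : ab.2 ∈ L2 := (Finset.mem_sort _).2 hb
    have hb1 : ab.2 ∉ L1 := fun h => (Finset.mem_sdiff.1 hb).2 ((Finset.mem_sort _).1 h)
    have ia : l.idxOf ab.1 < L1.length := by
      rw [hl, List.idxOf_append_of_mem ha1]
      exact List.idxOf_lt_length_iff.2 ha1
    have ib : l.idxOf ab.2 = L1.length + L2.idxOf ab.2 := by
      rw [hl, List.idxOf_append_of_notMem hb1]
    have ib2 : L2.idxOf ab.2 < L2.length := List.idxOf_lt_length_iff.2 hb2
    rw [Finset.mem_filter, Finset.mem_product, Finset.mem_range, Finset.mem_range]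
    have hal : ab.1 ∈ l := List.mem_append_left _ ha1
    have hbl : ab.2 ∈ l := List.mem_append_right _ hb2
    have gda : l.getD (l.idxOf ab.1) 0 = ab.1 := by
      rw [List.getD_eq_getElem l 0 (List.idxOf_lt_length_iff.2 hal), List.getElem_idxOf]
    have gdb : l.getD (l.idxOf ab.2) 0 = ab.2 := by
      rw [List.getD_eq_getElem l 0 (List.idxOf_lt_length_iff.2 hbl), List.getElem_idxOf]
    refine ⟨⟨by omega, by omega⟩, by omega, ?_, ?_⟩
    · rw [gda, gdb]; exact hlt
    · rw [gda, gdb]; exact hadj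
  · intro pq hpq
    rw [Finset.mem_filter, Finset.mem_product, Finset.mem_range, Finset.mem_range] at hpq
    obtain ⟨⟨h1, h2⟩, _, _, _⟩ := hpq
    have g1 : l.getD pq.1 0 = l[pq.1] := List.getD_eq_getElem l 0 h1
    have g2 : l.getD pq.2 0 = l[pq.2] := List.getD_eq_getElem l 0 h2
    apply Prod.ext
    · simp only [g1]
      exact hnd.idxOf_getElem pq.1 h1
    · simp only [g2]
      exact hnd.idxOf_getElem pq.2 h2
  · intro ab hab
    rw [Finset.mem_filter, Finset.mem_product] at hab
    obtain ⟨⟨ha, hb⟩, _, _⟩ := hab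
    have hal : ab.1 ∈ l := List.mem_append_left _ ((Finset.mem_sort _).2 ha)
    have hbl : ab.2 ∈ l := List.mem_append_right _ ((Finset.mem_sort _).2 hb)
    apply Prod.ext
    · rw [List.getD_eq_getElem l 0 (List.idxOf_lt_length_iff.2 hal), List.getElem_idxOf]
    · rw [List.getD_eq_getElem l 0 (List.idxOf_lt_length_iff.2 hbl), List.getElem_idxOf]

lemma rk_lt_rk {X : Finset ℕ} {v w : ℕ} (hw : w ∈ X) (hvw : v < w) :
    rk X v < rk X w := by
  apply Finset.card_lt_card
  refine ⟨fun u hu => ?_, fun hsub => ?_⟩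
  · rw [Finset.mem_filter] at hu ⊢
    exact ⟨hu.1, hu.2.trans hvw.le⟩
  · have h2 : w ∈ X.filter (fun u => u ≤ w) := Finset.mem_filter.2 ⟨hw, le_refl w⟩
    have h3 := Finset.mem_filter.1 (hsub h2)
    omega

lemma rk_injOn {X : Finset ℕ} {v w : ℕ} (hv : v ∈ X) (hw : w ∈ X)
    (h : rk X v = rk X w) : v = w := by
  rcases lt_trichotomy v w with hlt | heq | hgt
  · exact absurd h (rk_lt_rk hw hlt).ne
  · exact heq
  · exact absurd h.symm (rk_lt_rk hv hgt).ne

lemma rk_lt_iff {X : Finset ℕ} {v w : ℕ} (hv : v ∈ X) (hw : w ∈ X) :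
    rk X v < rk X w ↔ v < w := by
  constructor
  · intro h
    rcases lt_trichotomy v w with hlt | heq | hgt
    · exact hlt
    · exact absurd (heq ▸ h) (lt_irrefl _)
    · exact absurd (rk_lt_rk hv hgt) (by omega)
  · exact rk_lt_rk hw

lemma relAdj_iff (H : FinGraph) {a b : ℕ} (ha : a ∈ H.verts) (hb : b ∈ H.verts) :
    (relabelG H).Adj (rk H.verts a) (rk H.verts b) ↔ H.Adj a b := by
  constructor
  · rintro ⟨hne, v, w, hadj, hv, hw⟩
    have hvX := (H.support _ _ hadj).1
    have hwX := (H.support _ _ hadj).2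
    have hav : a = v := rk_injOn ha hvX hv
    have hbw : b = w := rk_injOn hb hwX hw
    rw [hav, hbw]; exact hadj
  · intro h
    have hab : a ≠ b := by rintro rfl; exact H.loopless a h
    exact ⟨fun he => hab (rk_injOn ha hb he), a, b, h, rfl, rfl⟩

lemma cpairs_relabel (H : FinGraph) (u : Finset ℕ) (hu : u ⊆ H.verts) :
    cpairs (relabelG H) (relabelF H.verts u) ((relabelG H).verts \ relabelF H.verts u)
      = cpairs H u (H.verts \ u) := by
  unfold cpairs
  symm
  apply Finset.card_bij (i := fun p _ => (rk H.verts p.1, rk H.verts p.2))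
  · intro p hp
    rw [Finset.mem_filter, Finset.mem_product] at hp
    obtain ⟨⟨h1, h2⟩, hlt, hadj⟩ := hp
    have h1X : p.1 ∈ H.verts := hu h1
    have h2X : p.2 ∈ H.verts := (Finset.mem_sdiff.1 h2).1
    have h2u : p.2 ∉ u := (Finset.mem_sdiff.1 h2).2
    rw [Finset.mem_filter, Finset.mem_product]
    refine ⟨⟨Finset.mem_image.2 ⟨p.1, h1, rfl⟩, Finset.mem_sdiff.2 ⟨?_, ?_⟩⟩,
      rk_lt_rk h1X hlt, (relAdj_iff H h1X h2X).2 hadj⟩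
    · exact Finset.mem_image.2 ⟨p.2, h2X, rfl⟩
    · rintro hm
      obtain ⟨c, hc, hce⟩ := Finset.mem_image.1 hm
      exact h2u (rk_injOn (hu hc) h2X hce ▸ hc)
  · intro p hp q hq he
    rw [Finset.mem_filter, Finset.mem_product] at hp hq
    have := Prod.ext_iff.1 he
    apply Prod.ext
    · exact rk_injOn (hu hp.1.1) (hu hq.1.1) this.1
    · exact rk_injOn (Finset.mem_sdiff.1 hp.1.2).1 (Finset.mem_sdiff.1 hq.1.2).1 this.2
  · intro q hq
    rw [Finset.mem_filter, Finset.mem_product] at hq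
    obtain ⟨⟨h1, h2⟩, hlt, hadj⟩ := hq
    obtain ⟨a, hau, ha⟩ := Finset.mem_image.1 h1
    have h2' := Finset.mem_sdiff.1 h2
    obtain ⟨b, hbX, hb⟩ := Finset.mem_image.1 h2'.1
    have hbu : b ∉ u := fun hbu => h2'.2 (Finset.mem_image.2 ⟨b, hbu, hb⟩)
    have haX : a ∈ H.verts := hu hau
    refine ⟨(a, b), ?_, ?_⟩
    · rw [Finset.mem_filter, Finset.mem_product]
      refine ⟨⟨hau, Finset.mem_sdiff.2 ⟨hbX, hbu⟩⟩, ?_, ?_⟩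
      · rw [← ha, ← hb] at hlt
        exact (rk_lt_iff hbX haX).1 hlt
      · rw [← ha, ← hb] at hadj
        exact (relAdj_iff H haX hbX).1 hadj
    · exact Prod.ext ha hb

lemma reconn_verts (G : FinGraph) (t : Finset ℕ) :
    (reconn G t).verts = G.verts \ t := by
  show G.verts \ Finset.biUnion {t} id = G.verts \ t
  rw [Finset.singleton_biUnion]
  rfl

lemma reconn_adj_far (G : FinGraph) {t t' : Finset ℕ} (hfar : FarApart G t t')
    (ht' : t' ⊆ G.verts) {a b : ℕ} (ha : a ∈ t') (hb : b ∈ G.verts \ t) :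
    (reconn G t).Adj a b ↔ G.Adj a b := by
  have haV : a ∈ G.verts \ t :=
    Finset.mem_sdiff.2 ⟨ht' ha, fun h => Finset.disjoint_left.1 hfar.1 h ha⟩
  have hbiu : Finset.biUnion {t} id = t := by rw [Finset.singleton_biUnion]; rfl
  constructor
  · rintro ⟨hne, _, _, h | ⟨f, hf, ⟨u, hu, hau⟩, _⟩⟩
    · exact h
    · exfalso
      rw [Finset.mem_singleton] at hf
      subst hf
      exact hfar.2 ⟨u, hu, a, ha, G.symm _ _ hau⟩
  · intro h
    have hab : a ≠ b := by rintro rfl; exact G.loopless a h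
    exact ⟨hab, by rw [hbiu]; exact haV, by rw [hbiu]; exact hb, Or.inl h⟩

lemma cpairs_reconn (G : FinGraph) {t t' : Finset ℕ} (hfar : FarApart G t t')
    (ht' : t' ⊆ G.verts) :
    cpairs (reconn G t) t' ((G.verts \ t) \ t') = cpairs G t' ((G.verts \ t) \ t') := by
  unfold cpairs
  congr 1
  apply Finset.filter_congr
  intro p hp
  rw [Finset.mem_product] at hp
  have hb : p.2 ∈ G.verts \ t := Finset.mem_sdiff.1 hp.2 |>.1 |> id
  exact and_congr_right fun _ => reconn_adj_far G hfar ht' hp.1 hb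

lemma cpairs_sdiff (G : FinGraph) {t t' : Finset ℕ} (hfar : FarApart G t t') :
    cpairs G t (G.verts \ t) = cpairs G t ((G.verts \ t) \ t') := by
  unfold cpairs
  congr 1
  ext p
  simp only [Finset.mem_filter, Finset.mem_product, Finset.mem_sdiff]
  constructor
  · rintro ⟨⟨h1, h2⟩, hlt, hadj⟩
    exact ⟨⟨h1, h2, fun h3 => hfar.2 ⟨p.1, h1, p.2, h3, hadj⟩⟩, hlt, hadj⟩
  · rintro ⟨⟨h1, h2, _⟩, hlt, hadj⟩
    exact ⟨⟨h1, h2⟩, hlt, hadj⟩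

end AuxSgn

open CDTub in
/-- For disjoint, non-linked (far apart) tubes `t, t'` of a connected graph on
`{1,…,n}`: `sgn^Γ(σ_t)·sgn^{Γ_t^*}(σ_{t'}) = sgn^Γ(σ_{t'})·sgn^{Γ_{t'}^*}(σ_t)`,
where the reconnected complements are relabelled order-preservingly. -/
theorem sgn_far_apart (G : FinGraph) (n : ℕ) (hV : G.verts = Finset.Icc 1 n)
    (hc : IsConnGraph G) (t t' : Finset ℕ) (ht : IsTube G t) (ht' : IsTube G t')
    (hfar : FarApart G t t') :
    graphSgn G (sigmaList G.verts t) *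
      graphSgn (relabelG (reconn G t))
        (sigmaList (relabelG (reconn G t)).verts (relabelF (reconn G t).verts t')) =
    graphSgn G (sigmaList G.verts t') *
      graphSgn (relabelG (reconn G t'))
        (sigmaList (relabelG (reconn G t')).verts (relabelF (reconn G t').verts t)) := by
  have htV : t ⊆ G.verts := ht.2.1
  have ht'V : t' ⊆ G.verts := ht'.2.1
  have hfar' : FarApart G t' t :=
    ⟨hfar.1.symm, fun ⟨v, hv, w, hw, hadj⟩ => hfar.2 ⟨w, hw, v, hv, G.symm _ _ hadj⟩⟩
  have hvt : (reconn G t).verts = G.verts \ t := reconn_verts G t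
  have hvt' : (reconn G t').verts = G.verts \ t' := reconn_verts G t'
  have ht'sub : t' ⊆ (reconn G t).verts := by
    rw [hvt]
    intro x hx
    exact Finset.mem_sdiff.2 ⟨ht'V hx, fun h => Finset.disjoint_left.1 hfar.1 h hx⟩
  have htsub : t ⊆ (reconn G t').verts := by
    rw [hvt']
    intro x hx
    exact Finset.mem_sdiff.2 ⟨htV hx, fun h => Finset.disjoint_left.1 hfar'.1 h hx⟩
  unfold graphSgn
  rw [invCount_sigmaList, invCount_sigmaList, invCount_sigmaList, invCount_sigmaList]
  rw [cpairs_relabel (reconn G t) t' ht'sub, cpairs_relabel (reconn G t') t htsub]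
  rw [hvt, hvt']
  rw [cpairs_reconn G hfar ht'V, cpairs_reconn G hfar' htV]
  rw [cpairs_sdiff G hfar, cpairs_sdiff G hfar']
  rw [sdiff_sdiff_comm (a := G.verts) (b := t) (c := t')]
  ring
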